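/- With φ_p(q) = #{(m,n) : m ≥ n ≥ 0, p ∤ C(m,n), m + n = q}, for every positive integer q and nonnegative integer k, φ_p(p^k q − 1) = ⌊(p+1)/2⌋^k · φ_p(q − 1). -/

import Mathlib

open Finset

/-- `φ_p(q)`: number of points in Pascal's triangle mod `p` on the anti-diagonal
`m + n = q`, extended by `0` to negative integers. -/
noncomputable def phi (p : ℕ) (q : ℤ) : ℕ :=
  {mn : ℕ × ℕ | mn.2 ≤ mn.1 ∧ (mn.1 : ℤ) + (mn.2 : ℤ) = q ∧ ¬ p ∣ Nat.choose mn.1 mn.2}.ncard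

/-- Finset version of phi on naturals. -/
def phiF (p N : ℕ) : ℕ :=
  ((Finset.range (N + 1) ×ˢ Finset.range (N + 1)).filter
    (fun mn => mn.2 ≤ mn.1 ∧ mn.1 + mn.2 = N ∧ ¬ p ∣ Nat.choose mn.1 mn.2)).card

lemma phi_eq_phiF (p N : ℕ) : phi p (N : ℤ) = phiF p N := by
  have hset : {mn : ℕ × ℕ | mn.2 ≤ mn.1 ∧ (mn.1 : ℤ) + (mn.2 : ℤ) = (N : ℤ) ∧
      ¬ p ∣ Nat.choose mn.1 mn.2} =
      ↑((Finset.range (N + 1) ×ˢ Finset.range (N + 1)).filter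
        (fun mn => mn.2 ≤ mn.1 ∧ mn.1 + mn.2 = N ∧ ¬ p ∣ Nat.choose mn.1 mn.2)) := by
    ext ⟨m, n⟩
    simp only [Set.mem_setOf_eq, Finset.coe_filter, Finset.mem_product, Finset.mem_range]
    constructor
    · rintro ⟨h1, h2, h3⟩
      have h2' : m + n = N := by exact_mod_cast h2
      exact ⟨⟨by omega, by omega⟩, h1, h2', h3⟩
    · rintro ⟨_, h1, h2, h3⟩
      exact ⟨h1, by exact_mod_cast h2, h3⟩
  rw [phi, hset, Set.ncard_coe_finset, phiF]

lemma not_dvd_choose_small {p a b : ℕ} (hp : p.Prime) (hb : b ≤ a) (ha : a < p) :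
    ¬ p ∣ Nat.choose a b := by
  intro h
  have hfac : p ∣ a.factorial := by
    rw [← Nat.choose_mul_factorial_mul_factorial hb]
    exact (h.mul_right _).mul_right _
  exact absurd ((Nat.Prime.dvd_factorial hp).mp hfac) (by omega)

lemma dvd_choose_iff {p : ℕ} (hp : p.Prime) (m n : ℕ) :
    p ∣ Nat.choose m n ↔ p ∣ Nat.choose (m % p) (n % p) ∨ p ∣ Nat.choose (m / p) (n / p) := by
  haveI : Fact p.Prime := ⟨hp⟩
  have h := Choose.choose_modEq_choose_mod_mul_choose_div_nat (n := m) (k := n) (p := p)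
  rw [Nat.ModEq] at h
  rw [Nat.dvd_iff_mod_eq_zero, h, ← Nat.dvd_iff_mod_eq_zero, hp.dvd_mul]

lemma euclid_unique {p x y r s : ℕ} (hp : 0 < p) (hr : r < p) (hs : s < p)
    (h : p * x + r = p * y + s) : x = y ∧ r = s := by
  have h1 : (p * x + r) % p = r := by rw [Nat.mul_add_mod]; exact Nat.mod_eq_of_lt hr
  have h2 : (p * y + s) % p = s := by rw [Nat.mul_add_mod]; exact Nat.mod_eq_of_lt hs
  have hrs : r = s := by rw [← h1, ← h2, h]
  refine ⟨?_, hrs⟩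
  subst hrs
  have := Nat.add_right_cancel h
  exact Nat.eq_of_mul_eq_mul_left hp this

/-- The key single-step lemma. -/
lemma phiF_step {p : ℕ} (hp : p.Prime) (N : ℕ) :
    phiF p (p * N + (p - 1)) = (p + 1) / 2 * phiF p N := by
  have hp1 : 1 ≤ p := hp.one_lt.le
  set M := p * N + (p - 1) with hM
  set c := (p + 1) / 2 with hc
  rw [phiF, phiF]
  have key : ((Finset.range (M + 1) ×ˢ Finset.range (M + 1)).filter
      (fun mn => mn.2 ≤ mn.1 ∧ mn.1 + mn.2 = M ∧ ¬ p ∣ Nat.choose mn.1 mn.2)).card =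
      (((Finset.range (N + 1) ×ˢ Finset.range (N + 1)).filter
      (fun mn => mn.2 ≤ mn.1 ∧ mn.1 + mn.2 = N ∧ ¬ p ∣ Nat.choose mn.1 mn.2)) ×ˢ
        Finset.Ico (p / 2) p).card := by
    apply Finset.card_nbij' (fun mn => ((mn.1 / p, mn.2 / p), mn.1 % p))
      (fun x => (p * x.1.1 + x.2, p * x.1.2 + (p - 1 - x.2)))
    · -- forward membership
      rintro ⟨m, n⟩ hmn
      simp only [Finset.mem_coe, Finset.mem_filter, Finset.mem_product, Finset.mem_range] at hmn
      obtain ⟨⟨hm, hn⟩, hle, hsum, hnd⟩ := hmn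
      have hdm := Nat.div_add_mod m p
      have hdn := Nat.div_add_mod n p
      set a := m % p with ha
      set b := n % p with hb
      set m' := m / p with hm'd
      set n' := n / p with hn'd
      have hap : a < p := Nat.mod_lt _ hp.pos
      have hbp : b < p := Nat.mod_lt _ hp.pos
      clear_value a b m' n'
      -- a + b = p - 1 and m' + n' = N
      have hsum' : p * (m' + n') + (a + b) = p * N + (p - 1) := by
        rw [Nat.mul_add]; omega
      have hab : a + b = p - 1 ∧ m' + n' = N := by
        rcases lt_or_ge (a + b) p with h | h
        · have := euclid_unique hp.pos h (by omega) hsum'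
          exact ⟨this.2, this.1⟩
        · exfalso
          have ht : a + b - p < p := by omega
          have : p * (m' + n' + 1) + (a + b - p) = p * N + (p - 1) := by
            rw [Nat.mul_add, Nat.mul_one]; omega
          have := euclid_unique hp.pos ht (by omega) this
          omega
      -- b ≤ a
      have hndab : ¬ p ∣ Nat.choose a b := by
        intro h; apply hnd
        rw [dvd_choose_iff hp, ← ha, ← hb, ← hm'd, ← hn'd]
        exact Or.inl h
      have hba : b ≤ a := by
        by_contra h
        exact hndab (by rw [Nat.choose_eq_zero_of_lt (by omega)]; exact dvd_zero p)
      -- n' ≤ m'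
      have hn'm' : n' ≤ m' := by
        by_contra h
        push_neg at h
        have : p * (m' + 1) ≤ p * n' := Nat.mul_le_mul_left p (by omega)
        rw [Nat.mul_add, Nat.mul_one] at this
        omega
      have hndq : ¬ p ∣ Nat.choose m' n' := by
        intro h; apply hnd
        rw [dvd_choose_iff hp, ← ha, ← hb, ← hm'd, ← hn'd]
        exact Or.inr h
      obtain ⟨hab1, hab2⟩ := hab
      have hm'N : m' ≤ N := by omega
      have hn'N : n' ≤ N := by omega
      have haT : p / 2 ≤ a := by omega
      simp only [Finset.mem_coe, Finset.mem_product, Finset.mem_filter, Finset.mem_range, Finset.mem_Ico]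
      rw [← ha, ← hm'd, ← hn'd]
      exact ⟨⟨⟨by omega, by omega⟩, hn'm', hab2, hndq⟩, haT, hap⟩
    · -- backward membership
      rintro ⟨⟨m', n'⟩, a⟩ hx
      simp only [Finset.mem_coe, Finset.mem_product, Finset.mem_filter, Finset.mem_range, Finset.mem_Ico] at hx
      obtain ⟨⟨⟨hm', hn'⟩, hle, hsum, hnd⟩, ha1, ha2⟩ := hx
      set b := p - 1 - a with hb
      have hba : b ≤ a := by omega
      have habsum : a + b = p - 1 := by omega
      have hmm : p * m' ≤ p * N := Nat.mul_le_mul_left p (by omega)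
      have hnn : p * n' ≤ p * N := Nat.mul_le_mul_left p (by omega)
      have hsum2 : (p * m' + a) + (p * n' + b) = M := by
        rw [hM, ← hsum, Nat.mul_add]; omega
      have hmod1 : (p * m' + a) % p = a := by rw [Nat.mul_add_mod]; exact Nat.mod_eq_of_lt ha2
      have hmod2 : (p * n' + b) % p = b := by
        rw [Nat.mul_add_mod]; exact Nat.mod_eq_of_lt (by omega)
      have hdiv1 : (p * m' + a) / p = m' := by
        rw [Nat.mul_add_div hp.pos, Nat.div_eq_of_lt ha2]; omega
      have hdiv2 : (p * n' + b) / p = n' := by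
        rw [Nat.mul_add_div hp.pos, Nat.div_eq_of_lt (show b < p by omega)]; omega
      have hnd2 : ¬ p ∣ Nat.choose (p * m' + a) (p * n' + b) := by
        rw [dvd_choose_iff hp, hmod1, hmod2, hdiv1, hdiv2]
        push_neg
        exact ⟨not_dvd_choose_small hp hba ha2, hnd⟩
      have hle2 : p * n' + b ≤ p * m' + a := by
        have : p * n' ≤ p * m' := Nat.mul_le_mul_left p hle
        omega
      simp only [Finset.mem_coe, Finset.mem_filter, Finset.mem_product, Finset.mem_range]
      exact ⟨⟨by omega, by omega⟩, hle2, hsum2, hnd2⟩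
    · -- left inverse
      rintro ⟨m, n⟩ hmn
      simp only [Finset.mem_coe, Finset.mem_filter, Finset.mem_product, Finset.mem_range] at hmn
      obtain ⟨⟨hm, hn⟩, hle, hsum, hnd⟩ := hmn
      have hdm := Nat.div_add_mod m p
      have hdn := Nat.div_add_mod n p
      set a := m % p with ha
      set b := n % p with hb
      set m' := m / p with hm'd
      set n' := n / p with hn'd
      have hap : a < p := Nat.mod_lt _ hp.pos
      have hbp : b < p := Nat.mod_lt _ hp.pos
      clear_value a b m' n'
      have hsum' : p * (m' + n') + (a + b) = p * N + (p - 1) := by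
        rw [Nat.mul_add]; omega
      have hab : a + b = p - 1 := by
        rcases lt_or_ge (a + b) p with h | h
        · exact (euclid_unique hp.pos h (by omega) hsum').2
        · exfalso
          have ht : a + b - p < p := by omega
          have : p * (m' + n' + 1) + (a + b - p) = p * N + (p - 1) := by
            rw [Nat.mul_add, Nat.mul_one]; omega
          have := euclid_unique hp.pos ht (by omega) this
          omega
      simp only [Prod.mk.injEq]
      rw [← ha, ← hm'd, ← hn'd]
      constructor
      · omega
      · omega
    · -- right inverse
      rintro ⟨⟨m', n'⟩, a⟩ hx
      simp only [Finset.mem_coe, Finset.mem_product, Finset.mem_filter, Finset.mem_range, Finset.mem_Ico] at hx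
      obtain ⟨⟨⟨hm', hn'⟩, hle, hsum, hnd⟩, ha1, ha2⟩ := hx
      have hmod1 : (p * m' + a) % p = a := by rw [Nat.mul_add_mod]; exact Nat.mod_eq_of_lt ha2
      have hdiv1 : (p * m' + a) / p = m' := by
        rw [Nat.mul_add_div hp.pos, Nat.div_eq_of_lt ha2]; omega
      have hdiv2 : (p * n' + (p - 1 - a)) / p = n' := by
        rw [Nat.mul_add_div hp.pos, Nat.div_eq_of_lt (show p - 1 - a < p by omega)]; omega
      simp only [Prod.mk.injEq]
      exact ⟨⟨hdiv1, hdiv2⟩, hmod1⟩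
  rw [key, Finset.card_product, Nat.card_Ico]
  have : p - p / 2 = c := by omega
  rw [this, Nat.mul_comm]

theorem phi_pow_mul_sub_one (p : ℕ) (hp : p.Prime) (q : ℕ) (hq : 0 < q) (k : ℕ) :
    phi p ((p : ℤ) ^ k * q - 1) = ((p + 1) / 2) ^ k * phi p ((q : ℤ) - 1) := by
  have hp1 : 1 ≤ p := hp.one_lt.le
  have hpk : ∀ j : ℕ, 1 ≤ p ^ j * q := fun j =>
    Nat.one_le_iff_ne_zero.mpr (Nat.mul_ne_zero (pow_ne_zero _ hp.pos.ne') hq.ne')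
  have hcast : ∀ j : ℕ, (p : ℤ) ^ j * q - 1 = ((p ^ j * q - 1 : ℕ) : ℤ) := by
    intro j
    have := hpk j
    push_cast [Nat.cast_sub this]
    ring
  have hq1 : (q : ℤ) - 1 = ((q - 1 : ℕ) : ℤ) := by
    push_cast [Nat.cast_sub hq]
    ring
  rw [hcast k, hq1, phi_eq_phiF, phi_eq_phiF]
  induction k with
  | zero => simp
  | succ k ih =>
    have hstep : p ^ (k + 1) * q - 1 = p * (p ^ k * q - 1) + (p - 1) := by
      have h1 := hpk k
      obtain ⟨s, hs⟩ : ∃ s, p ^ k * q = s + 1 := ⟨p ^ k * q - 1, by omega⟩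
      rw [pow_succ, Nat.mul_comm (p ^ k) p, Nat.mul_assoc, hs, Nat.mul_add, Nat.mul_one,
        Nat.add_sub_cancel]
      omega
    rw [hstep, phiF_step hp, ih]
    ring
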